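/- ∫₀^{π/2} (1 − 2t/(π/2 + t)) · sin(2t) dt ∈ (0.36, 0.37). -/

import Mathlib

open Real intervalIntegral

private lemma polyc (a0 a1 a2 a3 a4 a5 a6 a7 c y : ℝ) :
    HasDerivAt (fun y : ℝ => a0 + a1*(y - c) + a2*(y - c)^2 + a3*(y - c)^3 + a4*(y - c)^4
        + a5*(y - c)^5 + a6*(y - c)^6 + a7*(y - c)^7)
      (a1 + 2*a2*(y - c) + 3*a3*(y - c)^2 + 4*a4*(y - c)^3 + 5*a5*(y - c)^4 + 6*a6*(y - c)^5
        + 7*a7*(y - c)^6) y := by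
  have hs : HasDerivAt (fun y : ℝ => y - c) 1 y := (hasDerivAt_id y).sub_const c
  have h : ∀ (n : ℕ) (a : ℝ), HasDerivAt (fun y : ℝ => a * (y - c)^n)
      (a * (n * (y - c)^(n-1) * 1)) y :=
    fun n a => (((hasDerivAt_pow n (y - c)).comp y hs)).const_mul a
  refine ((((((((hasDerivAt_const y a0).add (hs.const_mul a1)).add
      (h 2 a2)).add (h 3 a3)).add (h 4 a4)).add (h 5 a5)).add (h 6 a6)).add (h 7 a7)).congr_deriv ?_
  push_cast
  ring

set_option maxHeartbeats 2000000 in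
private lemma key_deriv (t : ℝ) : HasDerivAt
    (fun t : ℝ => -(((1/6) + (-(16/27))/Real.pi^2 + (256/81)/Real.pi^4 + (-(10240/243))/Real.pi^6 : ℝ) + ((-(8/9))/Real.pi + (64/27)/Real.pi^3 + (-(5120/243))/Real.pi^5 + (286720/729)/Real.pi^7 : ℝ)*(t - Real.pi/4) + ((32/27)/Real.pi^2 + (-(512/81))/Real.pi^4 + (20480/243)/Real.pi^6 : ℝ)*(t - Real.pi/4)^2 + ((-(128/81))/Real.pi^3 + (10240/729)/Real.pi^5 + (-(573440/2187))/Real.pi^7 : ℝ)*(t - Real.pi/4)^3 + ((512/243)/Real.pi^4 + (-(20480/729))/Real.pi^6 : ℝ)*(t - Real.pi/4)^4 + ((-(2048/729))/Real.pi^5 + (114688/2187)/Real.pi^7 : ℝ)*(t - Real.pi/4)^5 + ((8192/2187)/Real.pi^6 : ℝ)*(t - Real.pi/4)^6 + ((-(32768/6561))/Real.pi^7 : ℝ)*(t - Real.pi/4)^7) * Real.cos (2*t) + (((-(4/9))/Real.pi + (32/27)/Real.pi^3 + (-(2560/243))/Real.pi^5 + (143360/729)/Real.pi^7 : ℝ)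 + ((32/27)/Real.pi^2 + (-(512/81))/Real.pi^4 + (20480/243)/Real.pi^6 : ℝ)*(t - Real.pi/4) + ((-(64/27))/Real.pi^3 + (5120/243)/Real.pi^5 + (-(286720/729))/Real.pi^7 : ℝ)*(t - Real.pi/4)^2 + ((1024/243)/Real.pi^4 + (-(40960/729))/Real.pi^6 : ℝ)*(t - Real.pi/4)^3 + ((-(5120/729))/Real.pi^5 + (286720/2187)/Real.pi^7 : ℝ)*(t - Real.pi/4)^4 + ((8192/729)/Real.pi^6 : ℝ)*(t - Real.pi/4)^5 + ((-(114688/6561))/Real.pi^7 : ℝ)*(t - Real.pi/4)^6 + (0 : ℝ)*(t - Real.pi/4)^7) * Real.sin (2*t))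
    ((-1 + Real.pi * (((4/3)/Real.pi) + ((-(16/9))/Real.pi^2)*(t - Real.pi/4) + ((64/27)/Real.pi^3)*(t - Real.pi/4)^2 + ((-(256/81))/Real.pi^4)*(t - Real.pi/4)^3 + ((1024/243)/Real.pi^5)*(t - Real.pi/4)^4 + ((-(4096/729))/Real.pi^6)*(t - Real.pi/4)^5 + ((16384/2187)/Real.pi^7)*(t - Real.pi/4)^6 + ((-(65536/6561))/Real.pi^8)*(t - Real.pi/4)^7)) * Real.sin (2*t)) t := by
  have h2t : HasDerivAt (fun t : ℝ => 2*t) 2 t := by simpa using (hasDerivAt_id t).const_mul 2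
  have hp := polyc ((1/6) + (-(16/27))/Real.pi^2 + (256/81)/Real.pi^4 + (-(10240/243))/Real.pi^6 : ℝ) ((-(8/9))/Real.pi + (64/27)/Real.pi^3 + (-(5120/243))/Real.pi^5 + (286720/729)/Real.pi^7 : ℝ) ((32/27)/Real.pi^2 + (-(512/81))/Real.pi^4 + (20480/243)/Real.pi^6 : ℝ) ((-(128/81))/Real.pi^3 + (10240/729)/Real.pi^5 + (-(573440/2187))/Real.pi^7 : ℝ) ((512/243)/Real.pi^4 + (-(20480/729))/Real.pi^6 : ℝ) ((-(2048/729))/Real.pi^5 + (114688/2187)/Real.pi^7 : ℝ) ((8192/2187)/Real.pi^6 : ℝ) ((-(32768/6561))/Real.pi^7 : ℝ) (Real.pi/4) t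
  have hq := polyc ((-(4/9))/Real.pi + (32/27)/Real.pi^3 + (-(2560/243))/Real.pi^5 + (143360/729)/Real.pi^7 : ℝ) ((32/27)/Real.pi^2 + (-(512/81))/Real.pi^4 + (20480/243)/Real.pi^6 : ℝ) ((-(64/27))/Real.pi^3 + (5120/243)/Real.pi^5 + (-(286720/729))/Real.pi^7 : ℝ) ((1024/243)/Real.pi^4 + (-(40960/729))/Real.pi^6 : ℝ) ((-(5120/729))/Real.pi^5 + (286720/2187)/Real.pi^7 : ℝ) ((8192/729)/Real.pi^6 : ℝ) ((-(114688/6561))/Real.pi^7 : ℝ) (0 : ℝ) (Real.pi/4) t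
  have H := (hp.neg.mul h2t.cos).add (hq.mul h2t.sin)
  refine H.congr_deriv ?_
  have hpi := Real.pi_ne_zero
  simp only [Pi.neg_apply]
  field_simp
  ring

set_option maxHeartbeats 2000000 in
private lemma key_deriv2 (t : ℝ) : HasDerivAt
    (fun t : ℝ => (-(((1/6) + (-(16/27))/Real.pi^2 + (256/81)/Real.pi^4 + (-(10240/243))/Real.pi^6 : ℝ) + ((-(8/9))/Real.pi + (64/27)/Real.pi^3 + (-(5120/243))/Real.pi^5 + (286720/729)/Real.pi^7 : ℝ)*(t - Real.pi/4) + ((32/27)/Real.pi^2 + (-(512/81))/Real.pi^4 + (20480/243)/Real.pi^6 : ℝ)*(t - Real.pi/4)^2 + ((-(128/81))/Real.pi^3 + (10240/729)/Real.pi^5 + (-(573440/2187))/Real.pi^7 : ℝ)*(t - Real.pi/4)^3 + ((512/243)/Real.pi^4 + (-(20480/729))/Real.pi^6 : ℝ)*(t - Real.pi/4)^4 + ((-(2048/729))/Real.pi^5 + (114688/2187)/Real.pi^7 : ℝ)*(t - Real.pi/4)^5 + ((8192/2187)/Real.pi^6 : ℝ)*(t - Real.pi/4)^6 + ((-(32768/6561))/Real.pi^7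 : ℝ)*(t - Real.pi/4)^7) * Real.cos (2*t) + (((-(4/9))/Real.pi + (32/27)/Real.pi^3 + (-(2560/243))/Real.pi^5 + (143360/729)/Real.pi^7 : ℝ) + ((32/27)/Real.pi^2 + (-(512/81))/Real.pi^4 + (20480/243)/Real.pi^6 : ℝ)*(t - Real.pi/4) + ((-(64/27))/Real.pi^3 + (5120/243)/Real.pi^5 + (-(286720/729))/Real.pi^7 : ℝ)*(t - Real.pi/4)^2 + ((1024/243)/Real.pi^4 + (-(40960/729))/Real.pi^6 : ℝ)*(t - Real.pi/4)^3 + ((-(5120/729))/Real.pi^5 + (286720/2187)/Real.pi^7 : ℝ)*(t - Real.pi/4)^4 + ((8192/729)/Real.pi^6 : ℝ)*(t - Real.pi/4)^5 + ((-(114688/6561))/Real.pi^7 : ℝ)*(t - Real.pi/4)^6 + (0 : ℝ)*(t - Real.pi/4)^7) * Real.sin (2*t)) + (2/6561) * (-Real.cos (2*t)/2))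
    (((-1 + Real.pi * (((4/3)/Real.pi) + ((-(16/9))/Real.pi^2)*(t - Real.pi/4) + ((64/27)/Real.pi^3)*(t - Real.pi/4)^2 + ((-(256/81))/Real.pi^4)*(t - Real.pi/4)^3 + ((1024/243)/Real.pi^5)*(t - Real.pi/4)^4 + ((-(4096/729))/Real.pi^6)*(t - Real.pi/4)^5 + ((16384/2187)/Real.pi^7)*(t - Real.pi/4)^6 + ((-(65536/6561))/Real.pi^8)*(t - Real.pi/4)^7)) * Real.sin (2*t)) + (2/6561) * Real.sin (2*t)) t := by
  have h2t : HasDerivAt (fun t : ℝ => 2*t) 2 t := by simpa using (hasDerivAt_id t).const_mul 2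
  have H := (key_deriv t).add (((h2t.cos.neg).div_const 2).const_mul (2/6561))
  refine H.congr_deriv ?_
  ring

private lemma cos_sin_vals : Real.cos (2*(Real.pi/2)) = -1 ∧ Real.sin (2*(Real.pi/2)) = 0 := by
  rw [show (2:ℝ)*(Real.pi/2) = Real.pi by ring]
  exact ⟨Real.cos_pi, Real.sin_pi⟩

set_option maxHeartbeats 2000000 in
private lemma intL :
    (∫ t in (0:ℝ)..(Real.pi/2), (-1 + Real.pi * (((4/3)/Real.pi) + ((-(16/9))/Real.pi^2)*(t - Real.pi/4) + ((64/27)/Real.pi^3)*(t - Real.pi/4)^2 + ((-(256/81))/Real.pi^4)*(t - Real.pi/4)^3 + ((1024/243)/Real.pi^5)*(t - Real.pi/4)^4 + ((-(4096/729))/Real.pi^6)*(t - Real.pi/4)^5 + ((16384/2187)/Real.pi^7)*(t - Real.pi/4)^6 + ((-(65536/6561))/Real.pi^8)*(t - Real.pi/4)^7)) * Real.sin (2*t)) = 1093/2187 - 1600/(729*Real.pi^2) + 4096/(243*Real.pi^4) - 20480/(243*Real.pi^6) := by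
  rw [intervalIntegral.integral_eq_sub_of_hasDerivAt (fun t _ => key_deriv t)
    ((Continuous.intervalIntegrable (by fun_prop) _ _))]
  obtain ⟨c1, s1⟩ := cos_sin_vals
  simp only [c1, s1, mul_zero, Real.cos_zero, Real.sin_zero]
  have hpi := Real.pi_ne_zero
  field_simp
  ring

set_option maxHeartbeats 2000000 in
private lemma intU :
    (∫ t in (0:ℝ)..(Real.pi/2), (((-1 + Real.pi * (((4/3)/Real.pi) + ((-(16/9))/Real.pi^2)*(t - Real.pi/4) + ((64/27)/Real.pi^3)*(t - Real.pi/4)^2 + ((-(256/81))/Real.pi^4)*(t - Real.pi/4)^3 + ((1024/243)/Real.pi^5)*(t - Real.pi/4)^4 + ((-(4096/729))/Real.pi^6)*(t - Real.pi/4)^5 + ((16384/2187)/Real.pi^7)*(t - Real.pi/4)^6 + ((-(65536/6561))/Real.pi^8)*(t - Real.pi/4)^7)) * Real.sin (2*t)) + (2/6561) * Real.sin (2*t)))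
      = (1093/2187 - 1600/(729*Real.pi^2) + 4096/(243*Real.pi^4) - 20480/(243*Real.pi^6)) + 2/6561 := by
  rw [intervalIntegral.integral_eq_sub_of_hasDerivAt (fun t _ => key_deriv2 t)
    ((Continuous.intervalIntegrable (by fun_prop) _ _))]
  obtain ⟨c1, s1⟩ := cos_sin_vals
  simp only [c1, s1, mul_zero, Real.cos_zero, Real.sin_zero]
  have hpi := Real.pi_ne_zero
  field_simp
  ring

set_option maxHeartbeats 2000000 in
private lemma sandwich : ∀ t ∈ Set.Icc (0:ℝ) (Real.pi/2),
    (((-1 + Real.pi * (((4/3)/Real.pi) + ((-(16/9))/Real.pi^2)*(t - Real.pi/4) + ((64/27)/Real.pi^3)*(t - Real.pi/4)^2 + ((-(256/81))/Real.pi^4)*(t - Real.pi/4)^3 + ((1024/243)/Real.pi^5)*(t - Real.pi/4)^4 + ((-(4096/729))/Real.pi^6)*(t - Real.pi/4)^5 + ((16384/2187)/Real.pi^7)*(t - Real.pi/4)^6 + ((-(65536/6561))/Real.pi^8)*(t - Real.pi/4)^7)) * Real.sin (2*t)) ≤ (1 - 2*t/(Real.pi/2 + t)) * Real.sin (2*t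)
    ∧ (1 - 2*t/(Real.pi/2 + t)) * Real.sin (2*t) ≤ ((-1 + Real.pi * (((4/3)/Real.pi) + ((-(16/9))/Real.pi^2)*(t - Real.pi/4) + ((64/27)/Real.pi^3)*(t - Real.pi/4)^2 + ((-(256/81))/Real.pi^4)*(t - Real.pi/4)^3 + ((1024/243)/Real.pi^5)*(t - Real.pi/4)^4 + ((-(4096/729))/Real.pi^6)*(t - Real.pi/4)^5 + ((16384/2187)/Real.pi^7)*(t - Real.pi/4)^6 + ((-(65536/6561))/Real.pi^8)*(t - Real.pi/4)^7)) * Real.sin (2*t)) + (2/6561) * Real.sin (2*t)) := by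
  intro t ht
  obtain ⟨ht0, ht1⟩ := ht
  have hpi := Real.pi_pos
  have hx : 0 < Real.pi/2 + t := by linarith
  have hs : 0 ≤ Real.sin (2*t) :=
    Real.sin_nonneg_of_nonneg_of_le_pi (by linarith) (by linarith)
  have hu0 : 0 ≤ ((t - Real.pi/4)/(3*Real.pi/4))^8 := by positivity
  have hu8 : ((t - Real.pi/4)/(3*Real.pi/4))^8 ≤ (1/3:ℝ)^8 := by
    have h1 : -(1/3 : ℝ) ≤ (t - Real.pi/4)/(3*Real.pi/4) := by
      rw [le_div_iff₀ (by positivity)]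
      nlinarith
    have h2 : (t - Real.pi/4)/(3*Real.pi/4) ≤ 1/3 := by
      rw [div_le_iff₀ (by positivity)]
      nlinarith
    calc ((t - Real.pi/4)/(3*Real.pi/4))^8
        = |((t - Real.pi/4)/(3*Real.pi/4))^8| := (abs_of_nonneg hu0).symm
      _ = |(t - Real.pi/4)/(3*Real.pi/4)|^8 := by rw [abs_pow]
      _ ≤ (1/3:ℝ)^8 := pow_le_pow_left₀ (abs_nonneg _) (abs_le.mpr ⟨h1, h2⟩) 8
  have key : (1 - 2*t/(Real.pi/2 + t)) * Real.sin (2*t) - ((-1 + Real.pi * (((4/3)/Real.pi) + ((-(16/9))/Real.pi^2)*(t - Real.pi/4) + ((64/27)/Real.pi^3)*(t - Real.pi/4)^2 + ((-(256/81))/Real.pi^4)*(t - Real.pi/4)^3 + ((1024/243)/Real.pi^5)*(t - Real.pi/4)^4 + ((-(4096/729))/Real.pi^6)*(t - Real.pi/4)^5 + ((16384/2187)/Real.pi^7)*(t - Real.pi/4)^6 + ((-(65536/6561))/Real.pi^8)*(t - Real.pi/4)^7)) * Real.sin (2*t))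
      = (Real.pi * (((t - Real.pi/4)/(3*Real.pi/4))^8 / (Real.pi/2 + t))) * Real.sin (2*t) := by
    have hx' : (Real.pi/2 + t) ≠ 0 := ne_of_gt hx
    have hpi' := Real.pi_ne_zero
    field_simp
    ring
  constructor
  · linarith [key, mul_nonneg (mul_nonneg hpi.le (div_nonneg hu0 hx.le)) hs]
  · have h7 : Real.pi * (((t - Real.pi/4)/(3*Real.pi/4))^8 / (Real.pi/2 + t)) ≤ 2/6561 := by
      rw [show Real.pi * (((t - Real.pi/4)/(3*Real.pi/4))^8 / (Real.pi/2 + t))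
          = (Real.pi * ((t - Real.pi/4)/(3*Real.pi/4))^8) / (Real.pi/2 + t) by ring,
        div_le_iff₀ hx]
      nlinarith [mul_le_mul_of_nonneg_left hu8 hpi.le, ht0]
    linarith [key, mul_le_mul_of_nonneg_right h7 hs]

theorem stmt_18 :
    (∫ t in (0:ℝ)..(Real.pi/2), (1 - 2*t/(Real.pi/2 + t)) * Real.sin (2*t))
      ∈ Set.Ioo (0.36:ℝ) 0.37 := by
  have hpi := Real.pi_pos
  have hab : (0:ℝ) ≤ Real.pi/2 := by positivity
  have hIcc : Set.uIcc (0:ℝ) (Real.pi/2) = Set.Icc (0:ℝ) (Real.pi/2) := Set.uIcc_of_le hab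
  have hintf : IntervalIntegrable (fun t : ℝ => (1 - 2*t/(Real.pi/2 + t)) * Real.sin (2*t))
      MeasureTheory.volume 0 (Real.pi/2) := by
    apply ContinuousOn.intervalIntegrable
    apply ContinuousOn.mul
    · apply ContinuousOn.sub continuousOn_const
      apply ContinuousOn.div (by fun_prop) (by fun_prop)
      intro x hx
      rw [hIcc] at hx
      have := hx.1
      positivity
    · fun_prop
  have hintL : IntervalIntegrable (fun t : ℝ => (-1 + Real.pi * (((4/3)/Real.pi) + ((-(16/9))/Real.pi^2)*(t - Real.pi/4) + ((64/27)/Real.pi^3)*(t - Real.pi/4)^2 + ((-(256/81))/Real.pi^4)*(t - Real.pi/4)^3 + ((1024/243)/Real.pi^5)*(t - Real.pi/4)^4 + ((-(4096/729))/Real.pi^6)*(t - Real.pi/4)^5 + ((16384/2187)/Real.pi^7)*(t - Real.pi/4)^6 + ((-(65536/6561))/Real.pi^8)*(t - Real.pi/4)^7)) * Real.sin (2*t))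
      MeasureTheory.volume 0 (Real.pi/2) := Continuous.intervalIntegrable (by fun_prop) _ _
  have hintU : IntervalIntegrable (fun t : ℝ => ((-1 + Real.pi * (((4/3)/Real.pi) + ((-(16/9))/Real.pi^2)*(t - Real.pi/4) + ((64/27)/Real.pi^3)*(t - Real.pi/4)^2 + ((-(256/81))/Real.pi^4)*(t - Real.pi/4)^3 + ((1024/243)/Real.pi^5)*(t - Real.pi/4)^4 + ((-(4096/729))/Real.pi^6)*(t - Real.pi/4)^5 + ((16384/2187)/Real.pi^7)*(t - Real.pi/4)^6 + ((-(65536/6561))/Real.pi^8)*(t - Real.pi/4)^7)) * Real.sin (2*t)) + (2/6561) * Real.sin (2*t))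
      MeasureTheory.volume 0 (Real.pi/2) := Continuous.intervalIntegrable (by fun_prop) _ _
  have h1 : (1093/2187 - 1600/(729*Real.pi^2) + 4096/(243*Real.pi^4) - 20480/(243*Real.pi^6) : ℝ)
      ≤ ∫ t in (0:ℝ)..(Real.pi/2), (1 - 2*t/(Real.pi/2 + t)) * Real.sin (2*t) := by
    rw [← intL]
    exact intervalIntegral.integral_mono_on hab hintL hintf (fun t ht => (sandwich t ht).1)
  have h2 : (∫ t in (0:ℝ)..(Real.pi/2), (1 - 2*t/(Real.pi/2 + t)) * Real.sin (2*t))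
      ≤ (1093/2187 - 1600/(729*Real.pi^2) + 4096/(243*Real.pi^4) - 20480/(243*Real.pi^6) : ℝ) + 2/6561 := by
    rw [← intU]
    exact intervalIntegral.integral_mono_on hab hintf hintU (fun t ht => (sandwich t ht).2)
  have hπl := Real.pi_gt_d6
  have hπu := Real.pi_lt_d6
  have e2l : (9.8696002:ℝ) < Real.pi^2 := by nlinarith
  have e2h : Real.pi^2 < 9.8696066 := by nlinarith
  have e4l : (97.409009:ℝ) < Real.pi^4 := by nlinarith
  have e4h : Real.pi^4 < 97.409134 := by nlinarith
  have e6l : (961.38799:ℝ) < Real.pi^6 := by nlinarith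
  have e6h : Real.pi^6 < 961.38983 := by nlinarith
  have b2h : (1600:ℝ)/(729*Real.pi^2) ≤ 1600/(729*9.8696002) := by gcongr <;> nlinarith
  have b2l : (1600:ℝ)/(729*9.8696066) ≤ 1600/(729*Real.pi^2) := by gcongr <;> nlinarith
  have b4h : (4096:ℝ)/(243*Real.pi^4) ≤ 4096/(243*97.409009) := by gcongr <;> nlinarith
  have b4l : (4096:ℝ)/(243*97.409134) ≤ 4096/(243*Real.pi^4) := by gcongr <;> nlinarith
  have b6h : (20480:ℝ)/(243*Real.pi^6) ≤ 20480/(243*961.38799) := by gcongr <;> nlinarith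
  have b6l : (20480:ℝ)/(243*961.38983) ≤ 20480/(243*Real.pi^6) := by gcongr <;> nlinarith
  constructor
  · have hnum : (0.36:ℝ) < 1093/2187 - 1600/(729*9.8696002) + 4096/(243*97.409134)
        - 20480/(243*961.38799) := by norm_num
    linarith
  · have hnum : (1093/2187 : ℝ) - 1600/(729*9.8696066) + 4096/(243*97.409009)
        - 20480/(243*961.38983) + 2/6561 < 0.37 := by norm_num
    linarith
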